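/- Fix an integer k ≥ 2 and an integer n ≥ 2k − 3. Then the interval coloring impropriety of the graph T_{n,n}^{(k)} satisfies impro(T_{n,n}^{(k)}) ≥ n/(2k+3); that is, for every improper interval edge coloring c of T_{n,n}^{(k)} there exist a vertex v and a color l ∈ ℤ with |c^{-1}(l) ∩ E_v| ≥ n/(2k+3). -/

import Mathlib

/-- A (not necessarily proper) edge coloring `c : Sym2 V → ℤ` of a graph `G` is an
*improper interval edge coloring* if for every vertex `v` the set of colors of the
edges incident with `v` is an interval of integers. -/
def IsImproperIntervalColoring {V : Type*} (G : SimpleGraph V) (c : Sym2 V → ℤ) : Prop :=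
  ∀ v : V, ∀ a ∈ c '' G.incidenceSet v, ∀ b ∈ c '' G.incidenceSet v,
    ∀ x : ℤ, a ≤ x → x ≤ b → x ∈ c '' G.incidenceSet v

/-- The vertex type of the graph `T_{m,n}^{(k)}`: `Sum.inl i` is the vertex `w_{i+1}`
(for `i : Fin (k-1)`), `Sum.inr none` is the center `v₀`, and `Sum.inr (some (i, j))`
is the vertex `v_{i+1}^{(j+1)}` (for `i : Fin n`, `j : Fin m`). -/
abbrev TVertex (k m n : ℕ) : Type := Fin (k - 1) ⊕ Option (Fin n × Fin m)

/-- The underlying (asymmetric) relation generating the edges of `T_{m,n}^{(k)}`: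
each `w` vertex is joined to everything else, `v₀` is joined to each `v_1^{(j)}`, and
`v_i^{(j)}` is joined to `v_{i+1}^{(j)}`. -/
def TrelB (k m n : ℕ) : TVertex k m n → TVertex k m n → Bool
  | Sum.inl _, _ => true
  | Sum.inr none, Sum.inr (some p) => decide ((p.1 : ℕ) = 0)
  | Sum.inr (some p), Sum.inr (some q) => decide (p.2 = q.2 ∧ (q.1 : ℕ) = (p.1 : ℕ) + 1)
  | _, _ => false

/-- The graph `T_{m,n}^{(k)}`: subdivide each edge of the star `K_{1,m}` with center `v₀`
into a path of `n` edges, then join each of the vertices `w_1, …, w_{k-1}` (which form a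
clique) to every other vertex. -/
def Tgraph (k m n : ℕ) : SimpleGraph (TVertex k m n) :=
  SimpleGraph.fromRel (fun x y => TrelB k m n x y = true)

/-- The vertex `w₁` of `T_{m,n}^{(k)}`. -/
def wOne (k m n : ℕ) (hk : 2 ≤ k) : TVertex k m n := Sum.inl ⟨0, by omega⟩

/-- The center vertex `v₀` of `T_{m,n}^{(k)}`. -/
def vZero (k m n : ℕ) : TVertex k m n := Sum.inr none

/-- The vertex `v_{i+1}^{(j+1)}` of `T_{m,n}^{(k)}` (0-indexed arguments). -/
def vij (k m n : ℕ) (i : Fin n) (j : Fin m) : TVertex k m n := Sum.inr (some (i, j))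

open SimpleGraph Set

lemma span_aux {V : Type*} [Fintype V] [DecidableEq V] (G : SimpleGraph V) (c : Sym2 V → ℤ)
    (hc : IsImproperIntervalColoring G c) (v : V) (e₁ e₂ : Sym2 V)
    (h₁ : e₁ ∈ G.incidenceSet v) (h₂ : e₂ ∈ G.incidenceSet v)
    (d : ℕ) (hd : (G.neighborSet v).ncard ≤ d) :
    c e₁ - c e₂ ≤ (d : ℤ) - 1 := by
  have hsub : Set.Icc (c e₂) (c e₁) ⊆ c '' G.incidenceSet v := fun x hx =>
    hc v (c e₂) ⟨e₂, h₂, rfl⟩ (c e₁) ⟨e₁, h₁, rfl⟩ x hx.1 hx.2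
  have h1 : (Set.Icc (c e₂) (c e₁)).ncard ≤ (c '' G.incidenceSet v).ncard :=
    Set.ncard_le_ncard hsub (Set.toFinite _)
  have h2 : (c '' G.incidenceSet v).ncard ≤ (G.incidenceSet v).ncard :=
    Set.ncard_image_le (Set.toFinite _)
  have h3 : (G.incidenceSet v).ncard = (G.neighborSet v).ncard := by
    rw [← Nat.card_coe_set_eq, ← Nat.card_coe_set_eq]
    exact Nat.card_congr (G.incidenceSetEquivNeighborSet v)
  have h4 : (Set.Icc (c e₂) (c e₁)).ncard = (c e₁ + 1 - c e₂).toNat := by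
    rw [← Finset.coe_Icc, Set.ncard_coe_finset, Int.card_Icc]
  omega

lemma span_abs {V : Type*} [Fintype V] [DecidableEq V] (G : SimpleGraph V) (c : Sym2 V → ℤ)
    (hc : IsImproperIntervalColoring G c) (v : V) (e₁ e₂ : Sym2 V)
    (h₁ : e₁ ∈ G.incidenceSet v) (h₂ : e₂ ∈ G.incidenceSet v)
    (d : ℕ) (hd : (G.neighborSet v).ncard ≤ d) :
    |c e₁ - c e₂| ≤ (d : ℤ) - 1 := by
  have a := span_aux G c hc v e₁ e₂ h₁ h₂ d hd
  have b := span_aux G c hc v e₂ e₁ h₂ h₁ d hd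
  rw [abs_le]; omega

lemma ncard_range_le' {α β : Type*} [Fintype α] (f : α → β) :
    (Set.range f).ncard ≤ Fintype.card α := by
  rw [← Set.image_univ]
  calc (f '' Set.univ).ncard ≤ (Set.univ : Set α).ncard := Set.ncard_image_le (Set.toFinite _)
    _ = Fintype.card α := by rw [Set.ncard_univ, Nat.card_eq_fintype_card]

lemma nb_v0_bound (k n : ℕ) (hk : 2 ≤ k) (hn : 0 < n) :
    ((Tgraph k n n).neighborSet (vZero k n n)).ncard ≤ n + k - 1 := by
  have hsub : (Tgraph k n n).neighborSet (vZero k n n) ⊆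
      (Set.range (Sum.inl : Fin (k-1) → TVertex k n n)) ∪
      (Set.range (fun j : Fin n => vij k n n ⟨0, hn⟩ j)) := by
    intro u hu
    rw [mem_neighborSet, Tgraph, fromRel_adj] at hu
    obtain ⟨hne, h⟩ := hu
    match u with
    | Sum.inl i => exact Or.inl ⟨i, rfl⟩
    | Sum.inr none => exact absurd rfl hne
    | Sum.inr (some ⟨p1, p2⟩) =>
      refine Or.inr ⟨p2, ?_⟩
      have hp : (p1 : ℕ) = 0 := by
        rcases h with h | h
        · simpa [TrelB, vZero] using h
        · simp [TrelB, vZero] at h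
      simp [vij, Fin.ext_iff, hp]
  calc ((Tgraph k n n).neighborSet (vZero k n n)).ncard
      ≤ ((Set.range (Sum.inl : Fin (k-1) → TVertex k n n)) ∪
        (Set.range (fun j : Fin n => vij k n n ⟨0, hn⟩ j))).ncard :=
        Set.ncard_le_ncard hsub (Set.toFinite _)
    _ ≤ (Set.range (Sum.inl : Fin (k-1) → TVertex k n n)).ncard +
        (Set.range (fun j : Fin n => vij k n n ⟨0, hn⟩ j)).ncard := Set.ncard_union_le _ _
    _ ≤ n + k - 1 := by
        have a := ncard_range_le' (Sum.inl : Fin (k-1) → TVertex k n n)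
        have b := ncard_range_le' (fun j : Fin n => vij k n n ⟨0, hn⟩ j)
        simp only [Fintype.card_fin] at a b
        omega

lemma nb_path_bound (k n : ℕ) (hk : 2 ≤ k) (i : Fin n) (j : Fin n) :
    ((Tgraph k n n).neighborSet (vij k n n i j)).ncard ≤ k + 1 := by
  set A : TVertex k n n :=
    if h : (i : ℕ) = 0 then Sum.inr none
    else Sum.inr (some (⟨(i : ℕ) - 1, by omega⟩, j)) with hA
  set B : TVertex k n n :=
    if h : (i : ℕ) + 1 < n then Sum.inr (some (⟨(i : ℕ) + 1, h⟩, j)) else A with hB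
  have hsub : (Tgraph k n n).neighborSet (vij k n n i j) ⊆
      (Set.range (Sum.inl : Fin (k-1) → TVertex k n n)) ∪ {A, B} := by
    intro u hu
    rw [mem_neighborSet, Tgraph, fromRel_adj] at hu
    obtain ⟨hne, h⟩ := hu
    match u with
    | Sum.inl t => exact Or.inl ⟨t, rfl⟩
    | Sum.inr none =>
      have hi : (i : ℕ) = 0 := by
        rcases h with h | h
        · simp [TrelB, vij] at h
        · simpa [TrelB, vZero, vij] using h
      refine Or.inr (Or.inl ?_)
      rw [hA, dif_pos hi]
    | Sum.inr (some ⟨q1, q2⟩) =>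
      rcases h with h | h
      · have h' : j = q2 ∧ (q1 : ℕ) = (i : ℕ) + 1 := by simpa [TrelB, vij] using h
        refine Or.inr (Or.inr ?_)
        have hlt : (i : ℕ) + 1 < n := h'.2 ▸ q1.isLt
        rw [hB, dif_pos hlt]
        simp [Fin.ext_iff, h'.2, h'.1.symm]
      · have h' : q2 = j ∧ (i : ℕ) = (q1 : ℕ) + 1 := by simpa [TrelB, vij] using h
        refine Or.inr (Or.inl ?_)
        have hi : ¬ (i : ℕ) = 0 := by omega
        rw [hA, dif_neg hi]
        simp [Fin.ext_iff, h'.1]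
        omega
  calc ((Tgraph k n n).neighborSet (vij k n n i j)).ncard
      ≤ ((Set.range (Sum.inl : Fin (k-1) → TVertex k n n)) ∪ {A, B}).ncard :=
        Set.ncard_le_ncard hsub (Set.toFinite _)
    _ ≤ (Set.range (Sum.inl : Fin (k-1) → TVertex k n n)).ncard + ({A, B} : Set _).ncard :=
        Set.ncard_union_le _ _
    _ ≤ k + 1 := by
        have a := ncard_range_le' (Sum.inl : Fin (k-1) → TVertex k n n)
        simp only [Fintype.card_fin] at a
        have b : ({A, B} : Set (TVertex k n n)).ncard ≤ 2 := by
          have := Set.ncard_insert_le A ({B} : Set (TVertex k n n))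
          simpa using this
        omega


/-- For `k ≥ 2` and `n ≥ 2k − 3`, the impropriety of `T_{n,n}^{(k)}` is at least
`n / (2k + 3)`: for every improper interval edge coloring `c` of `T_{n,n}^{(k)}` there
exist a vertex `v` and a color `l ∈ ℤ` with `|c⁻¹(l) ∩ E_v| ≥ n / (2k + 3)`. -/
theorem impropriety_lower_bound_Tgraph (k n : ℕ) (hk : 2 ≤ k) (hn : 2 * k - 3 ≤ n) :
    ∀ c : Sym2 (TVertex k n n) → ℤ, IsImproperIntervalColoring (Tgraph k n n) c →
      ∃ (v : TVertex k n n) (l : ℤ),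
        (n : ℚ) / (2 * k + 3) ≤
          ({e | e ∈ (Tgraph k n n).incidenceSet v ∧ c e = l}.ncard : ℚ) := by
  intro c hc
  have hn1 : 0 < n := by omega
  set G := Tgraph k n n with hG
  set W : TVertex k n n := wOne k n n hk with hW
  set Z : TVertex k n n := vZero k n n with hZ
  -- basic adjacency facts
  have adjW : ∀ x : TVertex k n n, x ≠ W → G.Adj W x := by
    intro x hx
    rw [hG, Tgraph, fromRel_adj]
    exact ⟨fun h => hx h.symm, Or.inl rfl⟩
  have adjZ1 : ∀ j : Fin n, G.Adj Z (vij k n n ⟨0, hn1⟩ j) := by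
    intro j
    rw [hG, Tgraph, fromRel_adj]
    refine ⟨by simp [hZ, vZero, vij], Or.inl ?_⟩
    simp [hZ, TrelB, vZero, vij]
  have adjP : ∀ (i : ℕ) (h1 : i < n) (h2 : i + 1 < n) (j : Fin n),
      G.Adj (vij k n n ⟨i, h1⟩ j) (vij k n n ⟨i+1, h2⟩ j) := by
    intro i h1 h2 j
    rw [hG, Tgraph, fromRel_adj]
    refine ⟨by simp [vij, Fin.ext_iff], Or.inl ?_⟩
    simp [TrelB, vij]
  set a₀ : ℤ := c s(Z, W) with ha₀
  have hZW : s(Z, W) ∈ G.incidenceSet Z := (G.mem_incidenceSet Z W).2 (G.adj_symm (adjW Z (by simp [hZ, hW, vZero, wOne])))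
  -- chain along each path
  have chain : ∀ (i : ℕ) (hi : i < n) (j : Fin n),
      ∃ e : Sym2 (TVertex k n n), e ∈ G.incidenceSet (vij k n n ⟨i, hi⟩ j) ∧
        |c e - a₀| ≤ (n : ℤ) + k - 2 + k * i := by
    intro i
    induction i with
    | zero =>
      intro hi j
      refine ⟨s(Z, vij k n n ⟨0, hi⟩ j), ?_, ?_⟩
      · rw [Sym2.eq_swap]
        exact (G.mem_incidenceSet _ _).2 (G.adj_symm (adjZ1 j))
      · have h1 : s(Z, vij k n n ⟨0, hi⟩ j) ∈ G.incidenceSet Z :=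
          (G.mem_incidenceSet Z _).2 (adjZ1 j)
        have hsp := span_abs G c hc Z _ _ h1 hZW (n + k - 1) (nb_v0_bound k n hk hn1)
        rw [← ha₀] at hsp
        rw [abs_le] at hsp ⊢
        push_cast at hsp ⊢
        omega
    | succ i ih =>
      intro hi j
      have hi' : i < n := by omega
      obtain ⟨e, he, hbd⟩ := ih hi' j
      refine ⟨s(vij k n n ⟨i, hi'⟩ j, vij k n n ⟨i+1, hi⟩ j), ?_, ?_⟩
      · rw [Sym2.eq_swap]
        exact (G.mem_incidenceSet _ _).2 (G.adj_symm (adjP i hi' hi j))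
      · have h1 : s(vij k n n ⟨i, hi'⟩ j, vij k n n ⟨i+1, hi⟩ j) ∈
            G.incidenceSet (vij k n n ⟨i, hi'⟩ j) :=
          (G.mem_incidenceSet _ _).2 (adjP i hi' hi j)
        have hsp := span_abs G c hc (vij k n n ⟨i, hi'⟩ j) _ e h1 he (k+1)
          (nb_path_bound k n hk ⟨i, hi'⟩ j)
        have hexp : (k : ℤ) * ((i : ℤ) + 1) = (k : ℤ) * (i : ℤ) + k := by ring
        rw [abs_le] at hsp hbd ⊢
        push_cast at hsp hbd ⊢
        omega
  -- colors of edges from W to path vertices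
  set R : ℤ := (n : ℤ) + k - 2 + k * n with hR
  have hWcol : ∀ (i : Fin n) (j : Fin n), |c s(W, vij k n n i j) - a₀| ≤ R := by
    intro i j
    obtain ⟨e, he, hbd⟩ := chain i.val i.isLt j
    have hWne : vij k n n i j ≠ W := by simp [hW, wOne, vij]
    have h1 : s(W, vij k n n i j) ∈ G.incidenceSet (vij k n n i j) := by
      rw [Sym2.eq_swap]
      exact (G.mem_incidenceSet _ _).2 (G.adj_symm (adjW _ hWne))
    have hsp := span_abs G c hc (vij k n n i j) _ e h1 he (k+1) (nb_path_bound k n hk i j)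
    have hi1 : ((i : ℕ) : ℤ) + 1 ≤ (n : ℤ) := by exact_mod_cast i.isLt
    have hkn : (k : ℤ) * ((i : ℕ) : ℤ) + k ≤ (k : ℤ) * n := by nlinarith [Int.ofNat_nonneg k]
    rw [abs_le] at hsp hbd ⊢
    rw [hR]
    push_cast at hsp hbd ⊢
    omega
  -- pigeonhole
  classical
  set s : Finset (Sym2 (TVertex k n n)) :=
    Finset.image (fun p : Fin n × Fin n => s(W, vij k n n p.1 p.2)) Finset.univ with hs
  set t : Finset ℤ := Finset.Icc (a₀ - R) (a₀ + R) with ht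
  have hmaps : ∀ e ∈ s, c e ∈ t := by
    intro e he
    rw [hs, Finset.mem_image] at he
    obtain ⟨p, -, rfl⟩ := he
    have := hWcol p.1 p.2
    rw [abs_le] at this
    rw [ht, Finset.mem_Icc]
    omega
  have hinj : Function.Injective (fun p : Fin n × Fin n => s(W, vij k n n p.1 p.2)) := by
    intro p q h
    simp only at h
    rw [Sym2.congr_right] at h
    simp only [vij, Sum.inr.injEq, Option.some.injEq, Prod.mk.injEq] at h
    exact Prod.ext h.1 h.2
  have hcard_s : s.card = n * n := by
    rw [hs, Finset.card_image_of_injective _ hinj]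
    simp
  have hRpos : 0 ≤ R := by
    have h0 : (0 : ℤ) ≤ (k : ℤ) * n := by positivity
    rw [hR]
    have h1 : (1 : ℤ) ≤ n := by exact_mod_cast hn1
    have h2 : (2 : ℤ) ≤ k := by exact_mod_cast hk
    omega
  have htne : t.Nonempty := ⟨a₀, by rw [ht, Finset.mem_Icc]; omega⟩
  have hcard_t : (t.card : ℤ) ≤ (2 * k + 3) * n := by
    rw [ht, Int.card_Icc]
    have h3 : 2 * (k : ℤ) ≤ (n : ℤ) + 3 := by
      have : 2 * k ≤ n + 3 := by omega
      exact_mod_cast this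
    have hr : (2 * (k : ℤ) + 3) * n = 2 * ((k : ℤ) * n) + 3 * n := by ring
    rw [hR]
    omega
  have hsum := Finset.card_eq_sum_card_fiberwise hmaps
  set q : ℚ := (n : ℚ) / (2 * k + 3) with hq
  have hq0 : 0 ≤ q := by rw [hq]; positivity
  have hkey : ∑ l ∈ t, q ≤ ∑ l ∈ t, ((s.filter (fun e => c e = l)).card : ℚ) := by
    have h1 : ∑ l ∈ t, ((s.filter (fun e => c e = l)).card : ℚ) = (s.card : ℚ) := by
      rw [hsum, Nat.cast_sum]
    rw [h1, Finset.sum_const, nsmul_eq_mul, hcard_s]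
    have h2 : (t.card : ℚ) ≤ (2 * (k : ℚ) + 3) * n := by exact_mod_cast hcard_t
    have h3 : (t.card : ℚ) * q ≤ ((2 * (k : ℚ) + 3) * n) * q := mul_le_mul_of_nonneg_right h2 hq0
    refine h3.trans ?_
    rw [hq]
    have h23 : ((2 * (k : ℚ) + 3)) ≠ 0 := by positivity
    have h4 : ((2 * (k : ℚ) + 3) * n) * ((n : ℚ) / (2 * (k : ℚ) + 3)) = (n : ℚ) * n := by
      field_simp
    rw [h4]
    exact le_of_eq (by push_cast; ring)
  obtain ⟨l, hlt, hl⟩ := Finset.exists_le_of_sum_le htne hkey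
  refine ⟨W, l, ?_⟩
  have hsubset : (↑(s.filter (fun e => c e = l)) : Set (Sym2 (TVertex k n n))) ⊆
      {e | e ∈ G.incidenceSet W ∧ c e = l} := by
    intro e he
    rw [Finset.coe_filter, Set.mem_setOf_eq] at he
    obtain ⟨hes, hcl⟩ := he
    rw [hs, Finset.mem_image] at hes
    obtain ⟨p, -, rfl⟩ := hes
    have hWne : vij k n n p.1 p.2 ≠ W := by simp [hW, wOne, vij]
    exact ⟨(G.mem_incidenceSet _ _).2 (adjW _ hWne), hcl⟩
  have hnc : (s.filter (fun e => c e = l)).card ≤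
      {e | e ∈ G.incidenceSet W ∧ c e = l}.ncard := by
    rw [← Set.ncard_coe_finset]
    exact Set.ncard_le_ncard hsubset (Set.toFinite _)
  calc (n : ℚ) / (2 * k + 3) = q := by rw [hq]
    _ ≤ ((s.filter (fun e => c e = l)).card : ℚ) := hl
    _ ≤ _ := by exact_mod_cast hnc
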